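/- Let ν be a probability measure on (0,∞)^V whose canonical field (β_i)_{i∈V} has the given finite-dimensional Laplace transforms. Then the field (β_i) is 1-dependent: if U, U′ ⊆ V satisfy d_𝒢(U,U′) ≥ 2 (graph distance), then (β_i)_{i∈U} and (β_j)_{j∈U′} are independent under ν. -/

import Mathlib

open MeasureTheory

namespace VRJPStmt

variable {V : Type*} [DecidableEq V]

/-- Right-hand side of the Laplace transform of the random potential `β`, for a finite
window `U`: each non-oriented edge inside `U` is counted once (hence the factor `1/2` in
front of the sum over ordered pairs), and each boundary edge `{i,j}` with `i ∈ U`, `j ∉ U`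
is counted once. -/
noncomputable def laplaceRHS (G : SimpleGraph V) [DecidableRel G.Adj]
    [∀ v : V, Fintype (G.neighborSet v)] (W : V → V → ℝ) (U : Finset V) (lam : V → ℝ) : ℝ :=
  Real.exp
    (-(1/2) * ∑ i ∈ U, ∑ j ∈ U,
        (if G.Adj i j then W i j * (Real.sqrt ((1 + lam i) * (1 + lam j)) - 1) else 0)
      - ∑ i ∈ U, ∑ j ∈ G.neighborFinset i \ U, W i j * (Real.sqrt (1 + lam i) - 1))
    * ∏ i ∈ U, (1 + lam i) ^ (-(1/2) : ℝ)

/-- `ν` is a probability measure on `(0,∞)^V` whose canonical field `(β_i)` has the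
prescribed finite-dimensional Laplace transforms. -/
def IsBetaField (G : SimpleGraph V) [DecidableRel G.Adj]
    [∀ v : V, Fintype (G.neighborSet v)] (W : V → V → ℝ)
    (ν : Measure (V → ℝ)) : Prop :=
  IsProbabilityMeasure ν ∧ (∀ᵐ β ∂ν, ∀ i, 0 < β i) ∧
    ∀ U : Finset V, ∀ lam : V → ℝ, (∀ i, 0 ≤ lam i) →
      ∫ β, Real.exp (-(∑ i ∈ U, lam i * β i)) ∂ν = laplaceRHS G W U lam

/-- Weight `W_σ = Π W_{σ_k, σ_{k+1}}` of a path given as a list of vertices. -/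
noncomputable def wWeight (W : V → V → ℝ) (l : List V) : ℝ :=
  ((l.zip l.tail).map (fun p => W p.1 p.2)).prod

/-- `(2β)_σ = Π_{k=0}^m 2 β_{σ_k}`. -/
noncomputable def twoBetaFull (β : V → ℝ) (l : List V) : ℝ :=
  (l.map (fun k => 2 * β k)).prod

/-- `(2β)^−_σ = Π_{k=0}^{m−1} 2 β_{σ_k}` (all vertices but the last one). -/
noncomputable def twoBetaMinus (β : V → ℝ) (l : List V) : ℝ :=
  (l.dropLast.map (fun k => 2 * β k)).prod

/-- `l` is a path from `i` to `j` for the adjacency relation `A`. -/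
def IsWalkList (A : V → V → Prop) (i j : V) (l : List V) : Prop :=
  l ≠ [] ∧ l.head? = some i ∧ l.getLast? = some j ∧ l.Chain' A

/-- Paths from `i` to `j` staying in the set `S`. -/
def PathsIn (G : SimpleGraph V) (S : Set V) (i j : V) (l : List V) : Prop :=
  IsWalkList G.Adj i j l ∧ ∀ x ∈ l, x ∈ S

/-- Paths starting at `i`, staying in `S` except for the last vertex, which is outside `S`. -/
def ExitPaths (G : SimpleGraph V) (S : Set V) (i : V) (l : List V) : Prop :=
  l ≠ [] ∧ l.head? = some i ∧ l.Chain' G.Adj ∧ (∀ x ∈ l.dropLast, x ∈ S) ∧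
    (∀ x, l.getLast? = some x → x ∉ S)

/-- `Ĝ^{(n)}(i,j) = Σ_{σ ∈ 𝒫^{(n)}_{i,j}} W_σ/(2β)_σ` if `i,j ∈ V_n`, `0` otherwise. -/
noncomputable def GhatN (G : SimpleGraph V) (W : V → V → ℝ) (Vseq : ℕ → Finset V)
    (n : ℕ) (i j : V) (β : V → ℝ) : ℝ :=
  if i ∈ Vseq n ∧ j ∈ Vseq n then
    ∑' l : {l : List V // PathsIn G (↑(Vseq n)) i j l}, wWeight W ↑l / twoBetaFull β ↑l
  else 0

/-- `ψ^{(n)}(i) = Σ_{σ ∈ 𝒫̄^{(n)}_i} W_σ/(2β)^−_σ` if `i ∈ V_n`, `1` otherwise. -/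
noncomputable def psiN (G : SimpleGraph V) (W : V → V → ℝ) (Vseq : ℕ → Finset V)
    (n : ℕ) (i : V) (β : V → ℝ) : ℝ :=
  if i ∈ Vseq n then
    ∑' l : {l : List V // ExitPaths G (↑(Vseq n)) i l}, wWeight W ↑l / twoBetaMinus β ↑l
  else 1

/-- The σ-algebra `ℱ_n` generated by the coordinates `(β_i)_{i ∈ V_n}`. -/
def FiltN (Vseq : ℕ → Finset V) (n : ℕ) : MeasurableSpace (V → ℝ) :=
  MeasurableSpace.comap (fun β (i : {x : V // x ∈ Vseq n}) => β ↑i) inferInstance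

/-- `(V_n)` is an increasing exhausting sequence of finite connected subsets of the graph. -/
def IsExhaustion (G : SimpleGraph V) (Vseq : ℕ → Finset V) : Prop :=
  (∀ n, Vseq n ⊆ Vseq (n+1)) ∧ (∀ n, (G.induce (↑(Vseq n) : Set V)).Connected) ∧
    ∀ x : V, ∃ n, x ∈ Vseq n


section LaplaceExt

variable {ι : Type*} [Fintype ι]

noncomputable def clamp01 (t : ℝ) : ℝ := min (max t 0) 1

lemma continuous_clamp01 : Continuous clamp01 :=
  ((continuous_id.max continuous_const).min continuous_const)

lemma clamp01_mem (t : ℝ) : clamp01 t ∈ Set.Icc (0:ℝ) 1 := by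
  constructor
  · exact le_min (le_max_right _ _) zero_le_one
  · exact min_le_right _ _

lemma clamp01_of_mem {t : ℝ} (h : t ∈ Set.Icc (0:ℝ) 1) : clamp01 t = t := by
  rcases h with ⟨h0, h1⟩
  simp [clamp01, max_eq_left h0, min_eq_left h1]

lemma integrable_of_bdd {α : Type*} [MeasurableSpace α] {μ : Measure α} [IsFiniteMeasure μ]
    {Q : α → ℝ} {C : ℝ} (hm : AEStronglyMeasurable Q μ) (hb : ∀ y, |Q y| ≤ C) :
    Integrable Q μ :=
  (integrable_const C).mono' hm (Filter.Eventually.of_forall fun y => by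
    simpa [Real.norm_eq_abs] using hb y)

theorem laplace_ext (μ₁ μ₂ : Measure (ι → ℝ))
    [IsProbabilityMeasure μ₁] [IsProbabilityMeasure μ₂]
    (hp1 : ∀ᵐ x ∂μ₁, ∀ i, 0 < x i) (hp2 : ∀ᵐ x ∂μ₂, ∀ i, 0 < x i)
    (hL : ∀ lam : ι → ℝ, (∀ i, 0 ≤ lam i) →
      ∫ x, Real.exp (-(∑ i, lam i * x i)) ∂μ₁ = ∫ x, Real.exp (-(∑ i, lam i * x i)) ∂μ₂) :
    μ₁ = μ₂ := by
  classical
  set h : (ι → ℝ) → ι → ℝ := fun x i => Real.exp (-(max (x i) 0)) with hh_def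
  have hh_meas : Measurable h :=
    measurable_pi_lambda _ fun i =>
      (((measurable_pi_apply i).max measurable_const).neg).exp
  set K : Set (ι → ℝ) := Set.Icc 0 1 with hK_def
  have hKc : IsCompact K := isCompact_Icc
  have hKm : MeasurableSet K := measurableSet_Icc
  have hhK : ∀ x, h x ∈ K := by
    intro x
    rw [hK_def, Set.mem_Icc]
    constructor
    · intro i; exact (Real.exp_pos _).le
    · intro i
      exact Real.exp_le_one_iff.mpr (neg_nonpos.mpr (le_max_right _ _))
  set m1 : Measure (ι → ℝ) := μ₁.map h with hm1_def
  set m2 : Measure (ι → ℝ) := μ₂.map h with hm2_def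
  haveI : IsProbabilityMeasure m1 := Measure.isProbabilityMeasure_map hh_meas.aemeasurable
  haveI : IsProbabilityMeasure m2 := Measure.isProbabilityMeasure_map hh_meas.aemeasurable
  have hpre : h ⁻¹' Kᶜ = ∅ :=
    Set.eq_empty_iff_forall_notMem.mpr fun x hx => hx (hhK x)
  have hs1 : m1 Kᶜ = 0 := by
    rw [hm1_def, Measure.map_apply hh_meas hKm.compl, hpre]; simp
  have hs2 : m2 Kᶜ = 0 := by
    rw [hm2_def, Measure.map_apply hh_meas hKm.compl, hpre]; simp
  have haeK1 : ∀ᵐ y ∂m1, y ∈ K := by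
    rw [ae_iff]; exact hs1
  have haeK2 : ∀ᵐ y ∂m2, y ∈ K := by
    rw [ae_iff]; exact hs2
  -- moments agree
  have moment : ∀ k : ι → ℕ,
      ∫ y, ∏ i, clamp01 (y i) ^ k i ∂m1 = ∫ y, ∏ i, clamp01 (y i) ^ k i ∂m2 := by
    intro k
    have hQc : Continuous fun y : ι → ℝ => ∏ i, clamp01 (y i) ^ k i :=
      continuous_finset_prod _ fun i _ =>
        (continuous_clamp01.comp (continuous_apply i)).pow _
    have key : ∀ (μ : Measure (ι → ℝ)), IsProbabilityMeasure μ → (∀ᵐ x ∂μ, ∀ i, 0 < x i) →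
        ∫ y, ∏ i, clamp01 (y i) ^ k i ∂(μ.map h)
          = ∫ x, Real.exp (-(∑ i, ((k i : ℝ)) * x i)) ∂μ := by
      intro μ _ hp
      rw [integral_map hh_meas.aemeasurable hQc.aestronglyMeasurable]
      refine integral_congr_ae ?_
      filter_upwards [hp] with x hx
      have hmem := Set.mem_Icc.mp (hhK x)
      have h1 : ∀ i, clamp01 (h x i) = Real.exp (-(x i)) := by
        intro i
        rw [clamp01_of_mem ⟨by simpa using hmem.1 i, by simpa using hmem.2 i⟩]
        simp [hh_def, max_eq_left (hx i).le]
      calc ∏ i, clamp01 (h x i) ^ k i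
          = ∏ i, Real.exp ((k i : ℝ) * (-(x i))) := by
            refine Finset.prod_congr rfl fun i _ => ?_
            rw [h1 i, ← Real.exp_nat_mul]
        _ = Real.exp (∑ i, (k i : ℝ) * (-(x i))) := (Real.exp_sum _ _).symm
        _ = Real.exp (-(∑ i, (k i : ℝ) * x i)) := by
            congr 1
            simp [mul_neg]
    rw [key μ₁ ‹_› hp1, key μ₂ ‹_› hp2, hL _ fun i => Nat.cast_nonneg _]
  -- Stone–Weierstrass step: the pushed-forward measures agree
  haveI : CompactSpace K := isCompact_iff_compactSpace.mp hKc
  set coordfn : ι → C(K, ℝ) := fun i =>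
    ContinuousMap.mk (fun x : K => (x : ι → ℝ) i)
      ((continuous_apply i).comp continuous_subtype_val) with hcoord_def
  set A : Subalgebra ℝ C(K, ℝ) := Algebra.adjoin ℝ (Set.range coordfn) with hA_def
  have hmono : ∀ m ∈ Submonoid.closure (Set.range coordfn),
      ∃ k : ι → ℕ, ∀ x : K, m x = ∏ i, ((x : ι → ℝ) i) ^ k i := by
    intro m hm
    induction hm using Submonoid.closure_induction with
    | mem q hq =>
      obtain ⟨i, rfl⟩ := hq
      refine ⟨fun j => if j = i then 1 else 0, fun x => ?_⟩
      rw [Finset.prod_eq_single i (fun b _ hb => by simp [hb]) (by simp)]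
      simp [hcoord_def]
    | one => exact ⟨0, fun x => by simp⟩
    | mul a b ha hb iha ihb =>
      obtain ⟨ka, hka⟩ := iha
      obtain ⟨kb, hkb⟩ := ihb
      exact ⟨ka + kb, fun x => by
        simp [ContinuousMap.mul_apply, hka, hkb, pow_add, Finset.prod_mul_distrib]⟩
  have hAprop : ∀ p ∈ Submodule.span ℝ
        ((Submonoid.closure (Set.range coordfn) : Submonoid C(K, ℝ)) : Set C(K, ℝ)),
      ∃ Q : (ι → ℝ) → ℝ, Continuous Q ∧ (∃ C, ∀ y, |Q y| ≤ C) ∧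
      (∀ x : K, p x = Q ↑x) ∧ ∫ y, Q y ∂m1 = ∫ y, Q y ∂m2 := by
    intro p hp
    induction hp using Submodule.span_induction with
    | mem m hm =>
      obtain ⟨k, hk⟩ := hmono m hm
      refine ⟨fun y => ∏ i, clamp01 (y i) ^ k i,
        continuous_finset_prod _ fun i _ =>
          (continuous_clamp01.comp (continuous_apply i)).pow _, ⟨1, ?_⟩, ?_, moment k⟩
      · intro y
        have h0 : 0 ≤ ∏ i, clamp01 (y i) ^ k i :=
          Finset.prod_nonneg fun i _ => pow_nonneg (clamp01_mem (y i)).1 _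
        have h1 : ∏ i, clamp01 (y i) ^ k i ≤ 1 :=
          Finset.prod_le_one (fun i _ => pow_nonneg (clamp01_mem (y i)).1 _)
            (fun i _ => pow_le_one₀ (clamp01_mem (y i)).1 (clamp01_mem (y i)).2)
        rw [abs_of_nonneg h0]; exact h1
      · intro x
        rw [hk x]
        refine Finset.prod_congr rfl fun i _ => ?_
        have hx := Set.mem_Icc.mp x.2
        rw [clamp01_of_mem ⟨by simpa using hx.1 i, by simpa using hx.2 i⟩]
    | zero =>
      exact ⟨fun _ => 0, continuous_const, ⟨0, fun y => by simp⟩,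
        fun x => by simp, by simp⟩
    | add a b ha hb iha ihb =>
      obtain ⟨Qa, hQac, ⟨Ca, hQab⟩, hQae, hQai⟩ := iha
      obtain ⟨Qb, hQbc, ⟨Cb, hQbb⟩, hQbe, hQbi⟩ := ihb
      refine ⟨fun y => Qa y + Qb y, hQac.add hQbc, ⟨Ca + Cb, fun y =>
        (abs_add_le _ _).trans (add_le_add (hQab y) (hQbb y))⟩,
        fun x => by simp [hQae x, hQbe x], ?_⟩
      have iQa1 : Integrable Qa m1 := integrable_of_bdd hQac.aestronglyMeasurable hQab
      have iQa2 : Integrable Qa m2 := integrable_of_bdd hQac.aestronglyMeasurable hQab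
      have iQb1 : Integrable Qb m1 := integrable_of_bdd hQbc.aestronglyMeasurable hQbb
      have iQb2 : Integrable Qb m2 := integrable_of_bdd hQbc.aestronglyMeasurable hQbb
      rw [integral_add iQa1 iQb1, integral_add iQa2 iQb2, hQai, hQbi]
    | smul r a ha iha =>
      obtain ⟨Qa, hQac, ⟨Ca, hQab⟩, hQae, hQai⟩ := iha
      refine ⟨fun y => r * Qa y, continuous_const.mul hQac, ⟨|r| * Ca, fun y => by
        rw [abs_mul]
        exact mul_le_mul_of_nonneg_left (hQab y) (abs_nonneg r)⟩,
        fun x => by simp [hQae x], ?_⟩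
      rw [integral_const_mul, integral_const_mul, hQai]
  have hsep : A.SeparatesPoints := by
    intro x y hxy
    have : ∃ i, (x : ι → ℝ) i ≠ (y : ι → ℝ) i := by
      by_contra hcon
      push_neg at hcon
      exact hxy (Subtype.ext (funext hcon))
    obtain ⟨i, hi⟩ := this
    exact ⟨coordfn i, ⟨coordfn i, Algebra.subset_adjoin ⟨i, rfl⟩, rfl⟩, by simpa [hcoord_def]⟩
  have hdense := ContinuousMap.subalgebra_topologicalClosure_eq_top_of_separatesPoints A hsep
  -- the integrals of any bounded continuous function agree
  have hm12 : m1 = m2 := by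
    apply ext_of_forall_lintegral_eq_of_IsFiniteMeasure
    intro f
    set g : (ι → ℝ) → ℝ := fun y => (f y : ℝ) with hg_def
    have hg_cont : Continuous g := NNReal.continuous_coe.comp f.continuous
    obtain ⟨Cf, hCf⟩ := f.bounded
    have hg_bdd : ∀ y, |g y| ≤ (f 0 : ℝ) + Cf := by
      intro y
      have hd := hCf y 0
      rw [NNReal.dist_eq] at hd
      have : (f y : ℝ) - (f 0 : ℝ) ≤ Cf := (le_abs_self _).trans hd
      rw [abs_of_nonneg (by positivity : (0:ℝ) ≤ g y)]
      simp only [hg_def]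
      linarith
    have hgi1 : Integrable g m1 := integrable_of_bdd hg_cont.aestronglyMeasurable hg_bdd
    have hgi2 : Integrable g m2 := integrable_of_bdd hg_cont.aestronglyMeasurable hg_bdd
    have main : ∫ y, g y ∂m1 = ∫ y, g y ∂m2 := by
      by_contra hne
      set δ := |∫ y, g y ∂m1 - ∫ y, g y ∂m2| with hδ_def
      have hδpos : 0 < δ := abs_pos.mpr (sub_ne_zero.mpr hne)
      set gK : C(K, ℝ) := ContinuousMap.mk (fun x : K => g ↑x)
        (hg_cont.comp continuous_subtype_val) with hgK_def
      have hgKmem : gK ∈ closure (A : Set C(K, ℝ)) := by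
        rw [← Subalgebra.topologicalClosure_coe, hdense]
        trivial
      obtain ⟨p, hpA, hpd⟩ := Metric.mem_closure_iff.mp hgKmem (δ / 3) (by positivity)
      have hpA2 : p ∈ Submodule.span ℝ
          ((Submonoid.closure (Set.range coordfn) : Submonoid C(K, ℝ)) : Set C(K, ℝ)) := by
        rw [← Algebra.adjoin_eq_span]; exact hpA
      obtain ⟨Q, hQc, ⟨C, hQb⟩, hQe, hQi⟩ := hAprop p hpA2
      have hQint1 : Integrable Q m1 := integrable_of_bdd hQc.aestronglyMeasurable hQb
      have hQint2 : Integrable Q m2 := integrable_of_bdd hQc.aestronglyMeasurable hQb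
      have hclose : ∀ (m : Measure (ι → ℝ)), IsProbabilityMeasure m → (∀ᵐ y ∂m, y ∈ K) →
          Integrable g m → Integrable Q m → |∫ y, g y ∂m - ∫ y, Q y ∂m| ≤ δ / 3 := by
        intro m _ hK_ae hgi hQint
        rw [← integral_sub hgi hQint]
        have hstep : ∫ y, |g y - Q y| ∂m ≤ ∫ _, δ / 3 ∂m := by
          refine integral_mono_ae ((hgi.sub hQint).abs) (integrable_const _) ?_
          filter_upwards [hK_ae] with y hy
          have heq : g y - Q y = gK ⟨y, hy⟩ - p ⟨y, hy⟩ := by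
            simp [hgK_def, hQe ⟨y, hy⟩]
          rw [heq, ← Real.dist_eq]
          exact (ContinuousMap.dist_apply_le_dist _).trans hpd.le
        calc |∫ y, (g y - Q y) ∂m| = ‖∫ y, (g y - Q y) ∂m‖ := (Real.norm_eq_abs _).symm
          _ ≤ ∫ y, ‖g y - Q y‖ ∂m := norm_integral_le_integral_norm _
          _ = ∫ y, |g y - Q y| ∂m := by simp [Real.norm_eq_abs]
          _ ≤ ∫ _, δ / 3 ∂m := hstep
          _ = δ / 3 := by simp
      have h1 := hclose m1 ‹_› haeK1 hgi1 hQint1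
      have h2 := hclose m2 ‹_› haeK2 hgi2 hQint2
      have : δ ≤ δ / 3 + δ / 3 := by
        calc δ = |(∫ y, g y ∂m1 - ∫ y, Q y ∂m1) + (∫ y, Q y ∂m2 - ∫ y, g y ∂m2)| := by
              rw [hδ_def]; congr 1; rw [hQi]; ring
          _ ≤ |∫ y, g y ∂m1 - ∫ y, Q y ∂m1| + |∫ y, Q y ∂m2 - ∫ y, g y ∂m2| := abs_add_le _ _
          _ ≤ δ / 3 + δ / 3 := add_le_add h1 (by rwa [abs_sub_comm])
      linarith
    rw [lintegral_coe_eq_integral f hgi1, lintegral_coe_eq_integral f hgi2, main]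
  -- transfer back
  set r : (ι → ℝ) → ι → ℝ := fun y i => -Real.log (y i) with hr_def
  have hr_meas : Measurable r :=
    measurable_pi_lambda _ fun i => (Real.measurable_log.comp (measurable_pi_apply i)).neg
  have hback : ∀ (μ : Measure (ι → ℝ)), IsProbabilityMeasure μ → (∀ᵐ x ∂μ, ∀ i, 0 < x i) →
      (μ.map h).map r = μ := by
    intro μ _ hp
    rw [Measure.map_map hr_meas hh_meas]
    have hae : (r ∘ h) =ᵐ[μ] id := by
      filter_upwards [hp] with x hx
      funext i
      simp only [Function.comp_apply, hr_def, hh_def, Real.log_exp, id_eq, neg_neg]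
      exact max_eq_left (hx i).le
    rw [Measure.map_congr hae, Measure.map_id]
  have e1 : μ₁ = m1.map r := (hback μ₁ ‹IsProbabilityMeasure μ₁› hp1).symm
  have e2 : μ₂ = m2.map r := (hback μ₂ ‹IsProbabilityMeasure μ₂› hp2).symm
  rw [e1, e2, hm12]

end LaplaceExt

section Graph

variable {V : Type*} [DecidableEq V]

lemma laplaceRHS_union (G : SimpleGraph V) [DecidableRel G.Adj]
    [∀ v : V, Fintype (G.neighborSet v)] (W : V → V → ℝ) (A B : Finset V)
    (hd : Disjoint A B) (hadj : ∀ i ∈ A, ∀ j ∈ B, ¬ G.Adj i j) (lam : V → ℝ) :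
    laplaceRHS G W (A ∪ B) lam = laplaceRHS G W A lam * laplaceRHS G W B lam := by
  classical
  unfold laplaceRHS
  conv_rhs => rw [mul_mul_mul_comm, ← Real.exp_add, ← Finset.prod_union hd]
  congr 1
  set e : V → V → ℝ := fun i j =>
    if G.Adj i j then W i j * (Real.sqrt ((1 + lam i) * (1 + lam j)) - 1) else 0 with he_def
  have hAB : ∀ i ∈ A, ∑ j ∈ B, e i j = 0 := fun i hi =>
    Finset.sum_eq_zero fun j hj => if_neg (hadj i hi j hj)
  have hBA : ∀ i ∈ B, ∑ j ∈ A, e i j = 0 := fun i hi =>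
    Finset.sum_eq_zero fun j hj => if_neg (fun h => hadj j hj i hi h.symm)
  have hS : ∑ i ∈ A ∪ B, ∑ j ∈ A ∪ B, e i j
      = (∑ i ∈ A, ∑ j ∈ A, e i j) + ∑ i ∈ B, ∑ j ∈ B, e i j := by
    rw [Finset.sum_union hd]
    have h1 : ∑ i ∈ A, ∑ j ∈ A ∪ B, e i j = ∑ i ∈ A, ∑ j ∈ A, e i j :=
      Finset.sum_congr rfl fun i hi => by
        rw [Finset.sum_union hd, hAB i hi, add_zero]
    have h2 : ∑ i ∈ B, ∑ j ∈ A ∪ B, e i j = ∑ i ∈ B, ∑ j ∈ B, e i j :=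
      Finset.sum_congr rfl fun i hi => by
        rw [Finset.sum_union hd, hBA i hi, zero_add]
    rw [h1, h2]
  have hBd : ∑ i ∈ A ∪ B, ∑ j ∈ G.neighborFinset i \ (A ∪ B),
        W i j * (Real.sqrt (1 + lam i) - 1)
      = (∑ i ∈ A, ∑ j ∈ G.neighborFinset i \ A, W i j * (Real.sqrt (1 + lam i) - 1))
        + ∑ i ∈ B, ∑ j ∈ G.neighborFinset i \ B, W i j * (Real.sqrt (1 + lam i) - 1) := by
    rw [Finset.sum_union hd]
    congr 1
    · refine Finset.sum_congr rfl fun i hi => ?_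
      have : G.neighborFinset i \ (A ∪ B) = G.neighborFinset i \ A := by
        ext j
        simp only [Finset.mem_sdiff, Finset.mem_union, SimpleGraph.mem_neighborFinset]
        constructor
        · rintro ⟨hj, hj2⟩; exact ⟨hj, fun h => hj2 (Or.inl h)⟩
        · rintro ⟨hj, hj2⟩
          exact ⟨hj, fun h => h.elim hj2 (fun hB => hadj i hi j hB hj)⟩
      rw [this]
    · refine Finset.sum_congr rfl fun i hi => ?_
      have : G.neighborFinset i \ (A ∪ B) = G.neighborFinset i \ B := by
        ext j
        simp only [Finset.mem_sdiff, Finset.mem_union, SimpleGraph.mem_neighborFinset]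
        constructor
        · rintro ⟨hj, hj2⟩; exact ⟨hj, fun h => hj2 (Or.inr h)⟩
        · rintro ⟨hj, hj2⟩
          exact ⟨hj, fun h => h.elim (fun hA => hadj j hA i hi hj.symm) hj2⟩
      rw [this]
  set sa := ∑ i ∈ A, ∑ j ∈ A, e i j with hsa
  set sb := ∑ i ∈ B, ∑ j ∈ B, e i j with hsb
  set ba := ∑ i ∈ A, ∑ j ∈ G.neighborFinset i \ A, W i j * (Real.sqrt (1 + lam i) - 1) with hba
  set bb := ∑ i ∈ B, ∑ j ∈ G.neighborFinset i \ B, W i j * (Real.sqrt (1 + lam i) - 1) with hbb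
  rw [hS, hBd]
  ring_nf

lemma measurableSet_pos {ι : Type*} [Countable ι] :
    MeasurableSet {x : ι → ℝ | ∀ i, 0 < x i} := by
  have : {x : ι → ℝ | ∀ i, 0 < x i} = ⋂ i, {x | 0 < x i} := by ext x; simp
  rw [this]
  exact MeasurableSet.iInter fun i => measurableSet_lt measurable_const (measurable_pi_apply i)

lemma continuous_expsum {ι : Type*} [Fintype ι] (l : ι → ℝ) :
    Continuous fun x : ι → ℝ => Real.exp (-(∑ i, l i * x i)) :=
  (((continuous_finset_sum _ fun i _ =>
    (continuous_const.mul (continuous_apply i))).neg).rexp)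

lemma key_indep (G : SimpleGraph V) [DecidableRel G.Adj]
    [∀ v : V, Fintype (G.neighborSet v)] (W : V → V → ℝ)
    (ν : Measure (V → ℝ)) (hν : IsBetaField G W ν) (A B : Finset V)
    (hd : Disjoint A B) (hadj : ∀ i ∈ A, ∀ j ∈ B, ¬ G.Adj i j)
    {SA : Set ({x : V // x ∈ A} → ℝ)} {SB : Set ({x : V // x ∈ B} → ℝ)}
    (hSA : MeasurableSet SA) (hSB : MeasurableSet SB) :
    ν ((fun β (i : {x : V // x ∈ A}) => β ↑i) ⁻¹' SA
        ∩ (fun β (j : {x : V // x ∈ B}) => β ↑j) ⁻¹' SB)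
      = ν ((fun β (i : {x : V // x ∈ A}) => β ↑i) ⁻¹' SA)
        * ν ((fun β (j : {x : V // x ∈ B}) => β ↑j) ⁻¹' SB) := by
  classical
  haveI : IsProbabilityMeasure ν := hν.1
  set T : Finset V := A ∪ B with hT_def
  set ρT : (V → ℝ) → ({x : V // x ∈ T} → ℝ) := fun β t => β ↑t with hρT
  set ρA : (V → ℝ) → ({x : V // x ∈ A} → ℝ) := fun β i => β ↑i with hρA
  set ρB : (V → ℝ) → ({x : V // x ∈ B} → ℝ) := fun β j => β ↑j with hρB
  have hρT_meas : Measurable ρT := measurable_pi_lambda _ fun t => measurable_pi_apply _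
  have hρA_meas : Measurable ρA := measurable_pi_lambda _ fun t => measurable_pi_apply _
  have hρB_meas : Measurable ρB := measurable_pi_lambda _ fun t => measurable_pi_apply _
  set πA : ({x : V // x ∈ T} → ℝ) → ({x : V // x ∈ A} → ℝ) :=
    fun x i => x ⟨↑i, Finset.mem_union_left _ i.2⟩ with hπA
  set πB : ({x : V // x ∈ T} → ℝ) → ({x : V // x ∈ B} → ℝ) :=
    fun x j => x ⟨↑j, Finset.mem_union_right _ j.2⟩ with hπB
  have hπA_meas : Measurable πA := measurable_pi_lambda _ fun t => measurable_pi_apply _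
  have hπB_meas : Measurable πB := measurable_pi_lambda _ fun t => measurable_pi_apply _
  set glue : (({x : V // x ∈ A} → ℝ) × ({x : V // x ∈ B} → ℝ)) → ({x : V // x ∈ T} → ℝ) :=
    fun z t => if h : ↑t ∈ A then z.1 ⟨↑t, h⟩
      else z.2 ⟨↑t, (Finset.mem_union.mp t.2).resolve_left h⟩ with hglue
  have hglue_meas : Measurable glue := by
    refine measurable_pi_lambda _ fun t => ?_
    by_cases h : ↑t ∈ A
    · simp only [hglue, dif_pos h]
      exact (measurable_pi_apply _).comp measurable_fst
    · simp only [hglue, dif_neg h]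
      exact (measurable_pi_apply _).comp measurable_snd
  set LT : Measure ({x : V // x ∈ T} → ℝ) := ν.map ρT with hLT
  set LA : Measure ({x : V // x ∈ A} → ℝ) := ν.map ρA with hLA
  set LB : Measure ({x : V // x ∈ B} → ℝ) := ν.map ρB with hLB
  haveI : IsProbabilityMeasure LT := Measure.isProbabilityMeasure_map hρT_meas.aemeasurable
  haveI : IsProbabilityMeasure LA := Measure.isProbabilityMeasure_map hρA_meas.aemeasurable
  haveI : IsProbabilityMeasure LB := Measure.isProbabilityMeasure_map hρB_meas.aemeasurable
  set PM : Measure (({x : V // x ∈ A} → ℝ) × ({x : V // x ∈ B} → ℝ)) := LA.prod LB with hPM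
  haveI : IsProbabilityMeasure PM := by rw [hPM]; infer_instance
  set MT : Measure ({x : V // x ∈ T} → ℝ) := PM.map glue with hMT
  haveI : IsProbabilityMeasure MT := Measure.isProbabilityMeasure_map hglue_meas.aemeasurable
  -- positivity events
  have hposT : ∀ᵐ x ∂LT, ∀ t, 0 < x t := by
    rw [hLT, ae_map_iff hρT_meas.aemeasurable measurableSet_pos]
    filter_upwards [hν.2.1] with β hβ t using hβ ↑t
  have hposA : ∀ᵐ x ∂LA, ∀ t, 0 < x t := by
    rw [hLA, ae_map_iff hρA_meas.aemeasurable measurableSet_pos]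
    filter_upwards [hν.2.1] with β hβ t using hβ ↑t
  have hposB : ∀ᵐ x ∂LB, ∀ t, 0 < x t := by
    rw [hLB, ae_map_iff hρB_meas.aemeasurable measurableSet_pos]
    filter_upwards [hν.2.1] with β hβ t using hβ ↑t
  have hposPM : ∀ᵐ z ∂PM, (∀ i, 0 < z.1 i) ∧ ∀ j, 0 < z.2 j := by
    rw [ae_iff]
    have hsub : {z : ({x : V // x ∈ A} → ℝ) × ({x : V // x ∈ B} → ℝ) |
          ¬ ((∀ i, 0 < z.1 i) ∧ ∀ j, 0 < z.2 j)}
        ⊆ ({x | ∀ i, 0 < x i}ᶜ ×ˢ Set.univ) ∪ (Set.univ ×ˢ {x | ∀ j, 0 < x j}ᶜ) := by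
      intro z hz
      simp only [Set.mem_setOf_eq, not_and_or] at hz
      rcases hz with hz | hz
      · exact Or.inl ⟨hz, Set.mem_univ _⟩
      · exact Or.inr ⟨Set.mem_univ _, hz⟩
    refine measure_mono_null hsub (measure_union_null ?_ ?_)
    · rw [hPM, Measure.prod_prod]
      have h0 : LA {x | ∀ i, 0 < x i}ᶜ = 0 := by
        rw [Set.compl_setOf]; exact ae_iff.mp hposA
      rw [h0, zero_mul]
    · rw [hPM, Measure.prod_prod]
      have h0 : LB {x | ∀ j, 0 < x j}ᶜ = 0 := by
        rw [Set.compl_setOf]; exact ae_iff.mp hposB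
      rw [h0, mul_zero]
  have hposMT : ∀ᵐ x ∂MT, ∀ t, 0 < x t := by
    rw [hMT, ae_map_iff hglue_meas.aemeasurable measurableSet_pos]
    filter_upwards [hposPM] with z hz t
    simp only [hglue]
    by_cases h : ↑t ∈ A
    · simpa [dif_pos h] using hz.1 _
    · simpa [dif_neg h] using hz.2 _
  -- Laplace transforms of LT and MT agree
  have hLTMT : LT = MT := by
    refine laplace_ext LT MT hposT hposMT ?_
    intro lam hlam
    set lamV : V → ℝ := fun v => if h : v ∈ T then lam ⟨v, h⟩ else 0 with hlamV_def
    have hlamV : ∀ v, 0 ≤ lamV v := by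
      intro v
      by_cases h : v ∈ T
      · simp only [hlamV_def, dif_pos h]; exact hlam _
      · simp [hlamV_def, dif_neg h]
    have hlamVT : ∀ t : {x : V // x ∈ T}, lamV ↑t = lam t := by
      intro t
      simp only [hlamV_def, dif_pos t.2]
    -- LHS
    have hsumT : ∀ β : V → ℝ,
        (∑ t : {x : V // x ∈ T}, lam t * β ↑t) = ∑ i ∈ T, lamV i * β i := by
      intro β
      rw [← Finset.sum_coe_sort T (fun i => lamV i * β i)]
      exact Finset.sum_congr rfl fun t _ => by rw [hlamVT]
    have hL1 : ∫ x, Real.exp (-(∑ t, lam t * x t)) ∂LT = laplaceRHS G W T lamV := by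
      calc ∫ x, Real.exp (-(∑ t, lam t * x t)) ∂LT
          = ∫ β, Real.exp (-(∑ t : {x : V // x ∈ T}, lam t * β ↑t)) ∂ν := by
            rw [hLT]
            exact integral_map hρT_meas.aemeasurable
              (continuous_expsum _).aestronglyMeasurable
        _ = ∫ β, Real.exp (-(∑ i ∈ T, lamV i * β i)) ∂ν :=
            integral_congr_ae (Filter.Eventually.of_forall fun β => by
              simp only; rw [hsumT β])
        _ = laplaceRHS G W T lamV := hν.2.2 T lamV hlamV
    -- RHS
    have hL2 : ∫ x, Real.exp (-(∑ t, lam t * x t)) ∂MT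
        = laplaceRHS G W A lamV * laplaceRHS G W B lamV := by
      have hstep0 : ∫ x, Real.exp (-(∑ t, lam t * x t)) ∂MT
          = ∫ z, Real.exp (-(∑ t, lam t * glue z t)) ∂PM := by
        rw [hMT]
        exact integral_map hglue_meas.aemeasurable
          (continuous_expsum _).aestronglyMeasurable
      rw [hstep0]
      have hsplit : ∀ z : ({x : V // x ∈ A} → ℝ) × ({x : V // x ∈ B} → ℝ),
          Real.exp (-(∑ t, lam t * glue z t))
            = Real.exp (-(∑ i : {x : V // x ∈ A}, lamV ↑i * z.1 i))
              * Real.exp (-(∑ j : {x : V // x ∈ B}, lamV ↑j * z.2 j)) := by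
        intro z
        rw [← Real.exp_add]
        congr 1
        set gl : V → ℝ := fun i => if h : i ∈ A then z.1 ⟨i, h⟩
          else if h2 : i ∈ B then z.2 ⟨i, h2⟩ else 0 with hgl_def
        have hglT : ∀ t : {x : V // x ∈ T}, glue z t = gl ↑t := by
          intro t
          by_cases h : ↑t ∈ A
          · simp only [hglue, hgl_def, dif_pos h]
          · simp only [hglue, hgl_def, dif_neg h,
              dif_pos ((Finset.mem_union.mp t.2).resolve_left h)]
        have e1 : ∑ t : {x : V // x ∈ T}, lam t * glue z t = ∑ i ∈ T, lamV i * gl i := by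
          rw [← Finset.sum_coe_sort T (fun i => lamV i * gl i)]
          exact Finset.sum_congr rfl fun t _ => by rw [hlamVT, hglT]
        have e2 : ∑ i ∈ A, lamV i * gl i = ∑ i : {x : V // x ∈ A}, lamV ↑i * z.1 i := by
          rw [← Finset.sum_coe_sort A (fun i => lamV i * gl i)]
          refine Finset.sum_congr rfl fun i _ => ?_
          simp only [hgl_def, dif_pos i.2]
        have e3 : ∑ j ∈ B, lamV j * gl j = ∑ j : {x : V // x ∈ B}, lamV ↑j * z.2 j := by
          rw [← Finset.sum_coe_sort B (fun j => lamV j * gl j)]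
          refine Finset.sum_congr rfl fun j _ => ?_
          have hjA : ↑j ∉ A := Finset.disjoint_right.mp hd j.2
          simp only [hgl_def, dif_neg hjA, dif_pos j.2]
        rw [e1, hT_def, Finset.sum_union hd, e2, e3, neg_add]
      calc ∫ z, Real.exp (-(∑ t, lam t * glue z t)) ∂PM
          = ∫ z, Real.exp (-(∑ i : {x : V // x ∈ A}, lamV ↑i * z.1 i))
              * Real.exp (-(∑ j : {x : V // x ∈ B}, lamV ↑j * z.2 j)) ∂PM :=
            integral_congr_ae (Filter.Eventually.of_forall hsplit)
        _ = (∫ x, Real.exp (-(∑ i : {x : V // x ∈ A}, lamV ↑i * x i)) ∂LA)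
            * ∫ x, Real.exp (-(∑ j : {x : V // x ∈ B}, lamV ↑j * x j)) ∂LB := by
            rw [hPM]
            exact integral_prod_mul (μ := LA) (ν := LB)
              (fun x => Real.exp (-(∑ i : {x : V // x ∈ A}, lamV ↑i * x i)))
              (fun y => Real.exp (-(∑ j : {x : V // x ∈ B}, lamV ↑j * y j)))
        _ = laplaceRHS G W A lamV * laplaceRHS G W B lamV := by
            have hA1 : ∫ x, Real.exp (-(∑ i : {x : V // x ∈ A}, lamV ↑i * x i)) ∂LA
                = laplaceRHS G W A lamV := by
              calc ∫ x, Real.exp (-(∑ i : {x : V // x ∈ A}, lamV ↑i * x i)) ∂LA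
                  = ∫ β, Real.exp (-(∑ i : {x : V // x ∈ A}, lamV ↑i * β ↑i)) ∂ν := by
                    rw [hLA]
                    exact integral_map hρA_meas.aemeasurable
                      (continuous_expsum _).aestronglyMeasurable
                _ = ∫ β, Real.exp (-(∑ i ∈ A, lamV i * β i)) ∂ν :=
                    integral_congr_ae (Filter.Eventually.of_forall fun β => by
                      simp only; rw [Finset.sum_coe_sort A (fun i => lamV i * β i)])
                _ = laplaceRHS G W A lamV := hν.2.2 A lamV hlamV
            have hB1 : ∫ x, Real.exp (-(∑ j : {x : V // x ∈ B}, lamV ↑j * x j)) ∂LB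
                = laplaceRHS G W B lamV := by
              calc ∫ x, Real.exp (-(∑ j : {x : V // x ∈ B}, lamV ↑j * x j)) ∂LB
                  = ∫ β, Real.exp (-(∑ j : {x : V // x ∈ B}, lamV ↑j * β ↑j)) ∂ν := by
                    rw [hLB]
                    exact integral_map hρB_meas.aemeasurable
                      (continuous_expsum _).aestronglyMeasurable
                _ = ∫ β, Real.exp (-(∑ j ∈ B, lamV j * β j)) ∂ν :=
                    integral_congr_ae (Filter.Eventually.of_forall fun β => by
                      simp only; rw [Finset.sum_coe_sort B (fun j => lamV j * β j)])
                _ = laplaceRHS G W B lamV := hν.2.2 B lamV hlamV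
            rw [hA1, hB1]
    rw [hL1, hL2, hT_def, laplaceRHS_union G W A B hd hadj lamV]
  -- conclude
  have hπAglue : ∀ z, πA (glue z) = z.1 := by
    intro z
    funext i
    simp only [hπA, hglue, dif_pos i.2]
  have hπBglue : ∀ z, πB (glue z) = z.2 := by
    intro z
    funext j
    have hjA : ↑j ∉ A := Finset.disjoint_right.mp hd j.2
    simp only [hπB, hglue, dif_neg hjA]
  have hcompA : ρA = πA ∘ ρT := rfl
  have hcompB : ρB = πB ∘ ρT := rfl
  have hset : ρA ⁻¹' SA ∩ ρB ⁻¹' SB = ρT ⁻¹' (πA ⁻¹' SA ∩ πB ⁻¹' SB) := by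
    rw [hcompA, hcompB]
    rfl
  have hmeasAB : MeasurableSet (πA ⁻¹' SA ∩ πB ⁻¹' SB) :=
    (hπA_meas hSA).inter (hπB_meas hSB)
  have hglue_pre : glue ⁻¹' (πA ⁻¹' SA ∩ πB ⁻¹' SB) = SA ×ˢ SB := by
    ext z
    simp only [Set.mem_preimage, Set.mem_inter_iff, Set.mem_prod, hπAglue z, hπBglue z]
  calc ν (ρA ⁻¹' SA ∩ ρB ⁻¹' SB) = LT (πA ⁻¹' SA ∩ πB ⁻¹' SB) := by
        rw [hset, hLT, Measure.map_apply hρT_meas hmeasAB]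
    _ = MT (πA ⁻¹' SA ∩ πB ⁻¹' SB) := by rw [hLTMT]
    _ = PM (SA ×ˢ SB) := by
        rw [hMT, Measure.map_apply hglue_meas hmeasAB, hglue_pre]
    _ = LA SA * LB SB := by rw [hPM, Measure.prod_prod]
    _ = ν (ρA ⁻¹' SA) * ν (ρB ⁻¹' SB) := by
        rw [hLA, hLB, Measure.map_apply hρA_meas hSA, Measure.map_apply hρB_meas hSB]

end Graph


open ProbabilityTheory in
/-- 1-dependence of the field `β`: if `U, U' ⊆ V` are at graph distance
at least 2, then `(β_i)_{i∈U}` and `(β_j)_{j∈U'}` are independent under `ν`. -/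
theorem stmt6 {V : Type*} [DecidableEq V] [Infinite V] (G : SimpleGraph V)
    [DecidableRel G.Adj] [∀ v : V, Fintype (G.neighborSet v)] (hconn : G.Connected)
    (W : V → V → ℝ) (hWsymm : ∀ i j, W i j = W j i) (hWpos : ∀ i j, G.Adj i j → 0 < W i j)
    (ν : MeasureTheory.Measure (V → ℝ)) (hν : IsBetaField G W ν)
    (U U' : Set V) (hdist : ∀ i ∈ U, ∀ j ∈ U', 2 ≤ G.dist i j) :
    IndepFun (fun β (i : U) => β ↑i) (fun β (j : U') => β ↑j) ν := by
  classical
  haveI : IsProbabilityMeasure ν := hν.1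
  set f : (V → ℝ) → (U → ℝ) := fun β (i : U) => β ↑i with hf_def
  set g : (V → ℝ) → (U' → ℝ) := fun β (j : U') => β ↑j with hg_def
  have hf_meas : Measurable f := measurable_pi_lambda _ fun i => measurable_pi_apply _
  have hg_meas : Measurable g := measurable_pi_lambda _ fun j => measurable_pi_apply _
  set p1 : Set (Set (V → ℝ)) :=
    (Set.preimage f) '' measurableCylinders (fun _ : U => ℝ) with hp1_def
  set p2 : Set (Set (V → ℝ)) :=
    (Set.preimage g) '' measurableCylinders (fun _ : U' => ℝ) with hp2_def
  have hgen1 : MeasurableSpace.comap f MeasurableSpace.pi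
      = MeasurableSpace.generateFrom p1 := by
    rw [← generateFrom_measurableCylinders, MeasurableSpace.comap_generateFrom]
  have hgen2 : MeasurableSpace.comap g MeasurableSpace.pi
      = MeasurableSpace.generateFrom p2 := by
    rw [← generateFrom_measurableCylinders, MeasurableSpace.comap_generateFrom]
  have hpi1 : IsPiSystem p1 := by
    rintro t1 ⟨a, ha, rfl⟩ t2 ⟨b, hb, rfl⟩ hne
    obtain ⟨x, hx⟩ := hne
    exact ⟨a ∩ b, isPiSystem_measurableCylinders a ha b hb ⟨f x, hx.1, hx.2⟩,
      (Set.preimage_inter).symm ▸ rfl⟩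
  have hpi2 : IsPiSystem p2 := by
    rintro t1 ⟨a, ha, rfl⟩ t2 ⟨b, hb, rfl⟩ hne
    obtain ⟨x, hx⟩ := hne
    exact ⟨a ∩ b, isPiSystem_measurableCylinders a ha b hb ⟨g x, hx.1, hx.2⟩,
      (Set.preimage_inter).symm ▸ rfl⟩
  have hdisjUU' : ∀ v, v ∈ U → v ∈ U' → False := by
    intro v hv hv'
    have h2 := hdist v hv v hv'
    rw [SimpleGraph.dist_self] at h2
    omega
  have hIndepSets : ProbabilityTheory.IndepSets p1 p2 ν := by
    rw [ProbabilityTheory.IndepSets_iff]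
    rintro t1 t2 ⟨a, ha, rfl⟩ ⟨b, hb, rfl⟩
    obtain ⟨s, S, hS, rfl⟩ := (mem_measurableCylinders a).mp ha
    obtain ⟨s', S', hS', rfl⟩ := (mem_measurableCylinders b).mp hb
    set A : Finset V := s.image (fun i : U => (i : V)) with hA_def
    set B : Finset V := s'.image (fun j : U' => (j : V)) with hB_def
    have hAU : ∀ v ∈ A, v ∈ U := by
      intro v hv
      obtain ⟨i, _, rfl⟩ := Finset.mem_image.mp hv
      exact i.2
    have hBU' : ∀ v ∈ B, v ∈ U' := by
      intro v hv
      obtain ⟨j, _, rfl⟩ := Finset.mem_image.mp hv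
      exact j.2
    have hd : Disjoint A B := by
      rw [Finset.disjoint_left]
      intro v hvA hvB
      exact hdisjUU' v (hAU v hvA) (hBU' v hvB)
    have hadj : ∀ i ∈ A, ∀ j ∈ B, ¬ G.Adj i j := by
      intro i hi j hj hAdj
      have h2 := hdist i (hAU i hi) j (hBU' j hj)
      have h1 : G.dist i j ≤ 1 := by
        have := SimpleGraph.dist_le (SimpleGraph.Walk.cons hAdj SimpleGraph.Walk.nil)
        simpa using this
      omega
    set θ : ({x : V // x ∈ A} → ℝ) → ({x : U // x ∈ s} → ℝ) :=
      fun x i => x ⟨↑↑i, Finset.mem_image_of_mem _ i.2⟩ with hθ_def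
    set θ' : ({x : V // x ∈ B} → ℝ) → ({x : U' // x ∈ s'} → ℝ) :=
      fun x j => x ⟨↑↑j, Finset.mem_image_of_mem _ j.2⟩ with hθ'_def
    have hθ_meas : Measurable θ := measurable_pi_lambda _ fun i => measurable_pi_apply _
    have hθ'_meas : Measurable θ' := measurable_pi_lambda _ fun j => measurable_pi_apply _
    have hfac1 : f ⁻¹' cylinder s S
        = (fun β (i : {x : V // x ∈ A}) => β ↑i) ⁻¹' (θ ⁻¹' S) := rfl
    have hfac2 : g ⁻¹' cylinder s' S'
        = (fun β (j : {x : V // x ∈ B}) => β ↑j) ⁻¹' (θ' ⁻¹' S') := rfl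
    rw [hfac1, hfac2]
    exact key_indep G W ν hν A B hd hadj (hθ_meas hS) (hθ'_meas hS')
  exact ProbabilityTheory.IndepSets.indep (hf_meas.comap_le) (hg_meas.comap_le)
    hpi1 hpi2 hgen1 hgen2 hIndepSets


end VRJPStmt
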